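/- Let 0 ≤ α < 1, K ≥ 0, and let d₀ > 0 and 0 < s ≤ d₀. Then (2/s²)·∫₀ˢ t·K/(d₀ - t)^α dt ≤ C(α)·K/s^α, where C(α) is a constant depending only on α (one may take C(α) = 2/(1-α)). -/

import Mathlib

open MeasureTheory intervalIntegral Set

/-- Let `0 ≤ α < 1`, `K ≥ 0`, `d₀ > 0`, `0 < s ≤ d₀`. Then
`(2/s²)·∫₀ˢ t·K/(d₀-t)^α dt ≤ (2/(1-α))·K/s^α`. -/
theorem stmt_3 (α K d₀ s : ℝ) (hα0 : 0 ≤ α) (hα1 : α < 1) (hK : 0 ≤ K)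
    (hd₀ : 0 < d₀) (hs : 0 < s) (hsd : s ≤ d₀) :
    (2 / s ^ 2) * ∫ t in (0 : ℝ)..s, t * K / (d₀ - t) ^ α ≤
      (2 / (1 - α)) * K / s ^ α := by
  have h1α : (0:ℝ) < 1 - α := by linarith
  set f : ℝ → ℝ := fun t => t * K / (d₀ - t) ^ α with hf
  set g : ℝ → ℝ := fun t => s * K * (s - t) ^ (-α) with hg
  -- integrability of g
  have hg_int : IntervalIntegrable g volume 0 s := by
    have h0 : IntervalIntegrable (fun x : ℝ => x ^ (-α)) volume 0 s :=
      intervalIntegral.intervalIntegrable_rpow' (by linarith)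
    have h1 := (h0.comp_sub_left s)
    simp only [sub_zero, sub_self] at h1
    exact (h1.symm.const_mul (s * K))
  -- pointwise bound a.e. on Icc 0 s
  have hae : f ≤ᵐ[volume.restrict (Icc 0 s)] g := by
    have hne : ∀ᵐ t : ℝ, t ≠ s := by
      rw [ae_iff]
      have : {a : ℝ | ¬a ≠ s} = {s} := by ext x; simp
      rw [this]; exact measure_singleton s
    have hmem : ∀ᵐ t ∂(volume.restrict (Icc 0 s)), t ∈ Icc 0 s :=
      ae_restrict_mem measurableSet_Icc
    filter_upwards [ae_restrict_of_ae hne, hmem] with t ht htm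
    have ht0 : 0 ≤ t := htm.1
    have hts : t < s := lt_of_le_of_ne htm.2 ht
    have hst : (0:ℝ) < s - t := by linarith
    have hdt : s - t ≤ d₀ - t := by linarith
    have hpow : (s - t) ^ α ≤ (d₀ - t) ^ α :=
      Real.rpow_le_rpow (le_of_lt hst) hdt hα0
    have hpos : (0:ℝ) < (s - t) ^ α := Real.rpow_pos_of_pos hst α
    calc f t ≤ s * K / (s - t) ^ α :=
          div_le_div₀ (mul_nonneg hs.le hK)
            (mul_le_mul_of_nonneg_right hts.le hK) hpos hpow
      _ = g t := by
          show s * K / (s - t) ^ α = s * K * (s - t) ^ (-α)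
          rw [Real.rpow_neg hst.le, div_eq_mul_inv]
  -- integrability of f by domination
  have hf_meas : AEStronglyMeasurable f (volume.restrict (Set.uIoc (0:ℝ) s)) := by
    apply Measurable.aestronglyMeasurable
    fun_prop
  have hf_int : IntervalIntegrable f volume 0 s := by
    apply hg_int.mono_fun hf_meas
    rw [Set.uIoc_of_le hs.le]
    have hae' : f ≤ᵐ[volume.restrict (Ioc 0 s)] g :=
      hae.filter_mono (ae_mono (Measure.restrict_mono Ioc_subset_Icc_self le_rfl))
    have hmem : ∀ᵐ t ∂(volume.restrict (Ioc (0:ℝ) s)), t ∈ Ioc 0 s :=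
      ae_restrict_mem measurableSet_Ioc
    filter_upwards [hae', hmem] with t h htm
    have hfnn : 0 ≤ f t := by
      have : (0:ℝ) ≤ d₀ - t := by have := htm.2; linarith
      exact div_nonneg (mul_nonneg htm.1.le hK) (Real.rpow_nonneg this _)
    simp only [Real.norm_eq_abs, abs_of_nonneg hfnn, abs_of_nonneg (hfnn.trans h)]
    exact h
  -- compute the integral of g
  have hgint_val : (∫ t in (0:ℝ)..s, g t) = s * K * (s ^ (1 - α) / (1 - α)) := by
    have h1 : (∫ t in (0:ℝ)..s, (s - t) ^ (-α)) = ∫ u in (0:ℝ)..s, u ^ (-α) := by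
      have := intervalIntegral.integral_comp_sub_left (a := (0:ℝ)) (b := s)
        (fun u : ℝ => u ^ (-α)) s
      simpa using this
    have h2 : (∫ u in (0:ℝ)..s, u ^ (-α)) = s ^ (1 - α) / (1 - α) := by
      rw [integral_rpow (Or.inl (by linarith))]
      rw [Real.zero_rpow (by linarith : -α + 1 ≠ 0)]
      ring_nf
    rw [hg]
    simp only
    rw [intervalIntegral.integral_const_mul, h1, h2]
  have hmono : (∫ t in (0:ℝ)..s, f t) ≤ ∫ t in (0:ℝ)..s, g t :=
    intervalIntegral.integral_mono_ae_restrict hs.le hf_int hg_int hae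
  have hcoef : (0:ℝ) ≤ 2 / s ^ 2 := by positivity
  calc (2 / s ^ 2) * ∫ t in (0:ℝ)..s, f t
      ≤ (2 / s ^ 2) * (s * K * (s ^ (1 - α) / (1 - α))) := by
        rw [← hgint_val]; exact mul_le_mul_of_nonneg_left hmono hcoef
    _ = (2 / (1 - α)) * K / s ^ α := by
        have hsne : s ≠ 0 := hs.ne'
        have hsα : (0:ℝ) < s ^ α := Real.rpow_pos_of_pos hs α
        have key : s ^ (1 - α) * s ^ α = s := by
          rw [← Real.rpow_add hs]; simp
        field_simp
        linear_combination K * key
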